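/- Let p be an odd prime, let i1, i2 ∈ {1,…,p−1} with i1 ≠ i2, and let n1, n2 ∈ {1,…,p−2} with n1 + n2 < p. Then Δ^{i1,i2}(n1,n2,p) ≡ −Δ^{i1,i2}(n1−1,n2,p) − Δ^{i1,i2}(n1,n2−1,p) (mod p); moreover, if p does not divide n1·i1 + n2·i2, then Δ^{i1,i2}(n1,n2,p) = −Δ^{i1,i2}(n1−1,n2,p) − Δ^{i1,i2}(n1,n2−1,p) as integers. -/

import Mathlib

open Finset

/-- `Acount p i1 i2 n1 n2 i` is the number of pairs `(X1, X2)` of disjoint subsets of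
the nonzero residues mod `p` with `|X1| = n1`, `|X2| = n2` and
`i1·ΣX1 + i2·ΣX2 = i` in `ℤ/p`. -/
def Acount (p : ℕ) [NeZero p] (i1 i2 n1 n2 : ℕ) (i : ZMod p) : ℕ :=
  (((((Finset.univ.erase (0 : ZMod p)).powersetCard n1) ×ˢ
      ((Finset.univ.erase (0 : ZMod p)).powersetCard n2)).filter
    (fun X => X.1 ∩ X.2 = ∅ ∧
      (i1 : ZMod p) * X.1.sum id + (i2 : ZMod p) * X.2.sum id = i))).card

/-- `Δ^{i1,i2}(n1,n2,p) = A_0^{i1,i2}(n1,n2,p) - A_1^{i1,i2}(n1,n2,p)`. -/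
def Delta (p : ℕ) [NeZero p] (i1 i2 n1 n2 : ℕ) : ℤ :=
  (Acount p i1 i2 n1 n2 0 : ℤ) - (Acount p i1 i2 n1 n2 1 : ℤ)

def Bcount (p : ℕ) [NeZero p] (i1 i2 n1 n2 : ℕ) (v : ZMod p) : ℕ :=
  ((((Finset.univ : Finset (ZMod p)).powersetCard n1) ×ˢ
      ((Finset.univ : Finset (ZMod p)).powersetCard n2)).filter
    (fun X => X.1 ∩ X.2 = ∅ ∧
      (i1 : ZMod p) * X.1.sum id + (i2 : ZMod p) * X.2.sum id = v)).card

lemma Bcount_split (p : ℕ) [NeZero p] (i1 i2 n1 n2 : ℕ) (hn1 : 1 ≤ n1) (hn2 : 1 ≤ n2)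
    (v : ZMod p) :
    Bcount p i1 i2 n1 n2 v =
      Acount p i1 i2 n1 n2 v + Acount p i1 i2 (n1-1) n2 v + Acount p i1 i2 n1 (n2-1) v := by
  classical
  set S := ((((Finset.univ : Finset (ZMod p)).powersetCard n1) ×ˢ
      ((Finset.univ : Finset (ZMod p)).powersetCard n2)).filter
    (fun X => X.1 ∩ X.2 = ∅ ∧
      (i1 : ZMod p) * X.1.sum id + (i2 : ZMod p) * X.2.sum id = v)) with hS
  have hsplit1 : (S.filter (fun X => (0:ZMod p) ∈ X.1)).card
      + (S.filter (fun X => (0:ZMod p) ∉ X.1)).card = S.card :=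
    Finset.card_filter_add_card_filter_not _
  have hsplit2 : ((S.filter (fun X => (0:ZMod p) ∉ X.1)).filter (fun X => (0:ZMod p) ∈ X.2)).card
      + ((S.filter (fun X => (0:ZMod p) ∉ X.1)).filter (fun X => (0:ZMod p) ∉ X.2)).card
      = (S.filter (fun X => (0:ZMod p) ∉ X.1)).card :=
    Finset.card_filter_add_card_filter_not _
  -- part "neither": equals Acount n1 n2
  have hA : ((S.filter (fun X => (0:ZMod p) ∉ X.1)).filter (fun X => (0:ZMod p) ∉ X.2))
      = ((((Finset.univ.erase (0 : ZMod p)).powersetCard n1) ×ˢ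
      ((Finset.univ.erase (0 : ZMod p)).powersetCard n2)).filter
    (fun X => X.1 ∩ X.2 = ∅ ∧
      (i1 : ZMod p) * X.1.sum id + (i2 : ZMod p) * X.2.sum id = v)) := by
    ext X
    simp only [hS, Finset.mem_filter, Finset.mem_product, Finset.mem_powersetCard,
      Finset.subset_erase, Finset.subset_univ, true_and]
    tauto
  -- part "0 ∈ X1": bijection with Acount (n1-1) n2
  have hB : (S.filter (fun X => (0:ZMod p) ∈ X.1)).card = Acount p i1 i2 (n1-1) n2 v := by
    rw [Acount]
    apply Finset.card_nbij' (fun X => (X.1.erase 0, X.2)) (fun X => (insert 0 X.1, X.2))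
    · intro X hX
      simp only [Finset.mem_coe, hS, Finset.mem_filter, Finset.mem_product, Finset.mem_powersetCard,
        Finset.subset_erase, Finset.subset_univ, true_and] at hX ⊢
      obtain ⟨⟨⟨hc1, hc2⟩, hdisj, hsum⟩, h0⟩ := hX
      have h02 : (0:ZMod p) ∉ X.2 := by
        intro h
        have : (0:ZMod p) ∈ X.1 ∩ X.2 := Finset.mem_inter.mpr ⟨h0, h⟩
        simp [hdisj] at this
      refine ⟨⟨⟨Finset.notMem_erase _ _, by rw [Finset.card_erase_of_mem h0, hc1]⟩, h02, hc2⟩, ?_, ?_⟩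
      · apply Finset.eq_empty_of_forall_notMem
        intro x hx
        rw [Finset.mem_inter, Finset.mem_erase] at hx
        have : x ∈ X.1 ∩ X.2 := Finset.mem_inter.mpr ⟨hx.1.2, hx.2⟩
        simp [hdisj] at this
      · rwa [Finset.sum_erase _ (show id (0:ZMod p) = 0 from rfl)]
    · intro X hX
      simp only [Finset.mem_coe, hS, Finset.mem_filter, Finset.mem_product, Finset.mem_powersetCard,
        Finset.subset_erase, Finset.subset_univ, true_and] at hX ⊢
      obtain ⟨⟨⟨h01, hc1⟩, h02, hc2⟩, hdisj, hsum⟩ := hX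
      refine ⟨⟨⟨?_, hc2⟩, ?_, ?_⟩, Finset.mem_insert_self _ _⟩
      · rw [Finset.card_insert_of_notMem h01, hc1]; omega
      · apply Finset.eq_empty_of_forall_notMem
        intro x hx
        rw [Finset.mem_inter, Finset.mem_insert] at hx
        rcases hx.1 with h | h
        · exact h02 (h ▸ hx.2)
        · have : x ∈ X.1 ∩ X.2 := Finset.mem_inter.mpr ⟨h, hx.2⟩
          simp [hdisj] at this
      · rwa [Finset.sum_insert h01, show id (0:ZMod p) = 0 from rfl, zero_add]
    · intro X hX
      simp only [Finset.mem_coe, hS, Finset.mem_filter] at hX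
      exact Prod.ext (Finset.insert_erase hX.2) rfl
    · intro X hX
      simp only [Finset.mem_coe, Finset.mem_filter, Finset.mem_product, Finset.mem_powersetCard,
        Finset.subset_erase] at hX
      exact Prod.ext (Finset.erase_insert hX.1.1.1.2) rfl
  have hC : ((S.filter (fun X => (0:ZMod p) ∉ X.1)).filter (fun X => (0:ZMod p) ∈ X.2)).card
      = Acount p i1 i2 n1 (n2-1) v := by
    rw [Acount]
    apply Finset.card_nbij' (fun X => (X.1, X.2.erase 0)) (fun X => (X.1, insert 0 X.2))
    · intro X hX
      simp only [Finset.mem_coe, hS, Finset.mem_filter, Finset.mem_product, Finset.mem_powersetCard,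
        Finset.subset_erase, Finset.subset_univ, true_and] at hX ⊢
      obtain ⟨⟨⟨⟨hc1, hc2⟩, hdisj, hsum⟩, h01⟩, h02⟩ := hX
      refine ⟨⟨⟨h01, hc1⟩, Finset.notMem_erase _ _, by rw [Finset.card_erase_of_mem h02, hc2]⟩, ?_, ?_⟩
      · apply Finset.eq_empty_of_forall_notMem
        intro x hx
        rw [Finset.mem_inter, Finset.mem_erase] at hx
        have : x ∈ X.1 ∩ X.2 := Finset.mem_inter.mpr ⟨hx.1, hx.2.2⟩
        simp [hdisj] at this
      · rwa [Finset.sum_erase _ (show id (0:ZMod p) = 0 from rfl)]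
    · intro X hX
      simp only [Finset.mem_coe, hS, Finset.mem_filter, Finset.mem_product, Finset.mem_powersetCard,
        Finset.subset_erase, Finset.subset_univ, true_and] at hX ⊢
      obtain ⟨⟨⟨h01, hc1⟩, h02, hc2⟩, hdisj, hsum⟩ := hX
      refine ⟨⟨⟨⟨hc1, ?_⟩, ?_, ?_⟩, h01⟩, Finset.mem_insert_self _ _⟩
      · rw [Finset.card_insert_of_notMem h02, hc2]; omega
      · apply Finset.eq_empty_of_forall_notMem
        intro x hx
        rw [Finset.mem_inter, Finset.mem_insert] at hx
        rcases hx.2 with h | h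
        · exact h01 (h ▸ hx.1)
        · have : x ∈ X.1 ∩ X.2 := Finset.mem_inter.mpr ⟨hx.1, h⟩
          simp [hdisj] at this
      · rwa [Finset.sum_insert h02, show id (0:ZMod p) = 0 from rfl, zero_add]
    · intro X hX
      simp only [Finset.mem_coe, Finset.mem_filter] at hX
      exact Prod.ext rfl (Finset.insert_erase hX.2)
    · intro X hX
      simp only [Finset.mem_coe, Finset.mem_filter, Finset.mem_product, Finset.mem_powersetCard,
        Finset.subset_erase] at hX
      exact Prod.ext rfl (Finset.erase_insert hX.1.2.1.2)
  have hAc : ((S.filter (fun X => (0:ZMod p) ∉ X.1)).filter (fun X => (0:ZMod p) ∉ X.2)).card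
      = Acount p i1 i2 n1 n2 v := by rw [hA]; rfl
  have : Bcount p i1 i2 n1 n2 v = S.card := rfl
  omega

lemma Bcount_affine_le (p : ℕ) [NeZero p] (hp : p.Prime) (i1 i2 n1 n2 : ℕ) (u c v : ZMod p)
    (hu : u ≠ 0) :
    Bcount p i1 i2 n1 n2 v ≤
      Bcount p i1 i2 n1 n2 (u * v + ((n1 : ZMod p) * i1 + (n2 : ZMod p) * i2) * c) := by
  classical
  haveI : Fact p.Prime := ⟨hp⟩
  set f : ZMod p → ZMod p := fun x => u * x + c with hf
  have hfinj : Function.Injective f := fun a b h => by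
    have h2 : u * a + c = u * b + c := h
    exact mul_left_cancel₀ hu (add_right_cancel h2)
  apply Finset.card_le_card_of_injOn (fun X => (X.1.image f, X.2.image f))
  · intro X hX
    simp only [Finset.mem_coe, Finset.mem_filter, Finset.mem_product, Finset.mem_powersetCard,
      Finset.subset_univ, true_and] at hX ⊢
    obtain ⟨⟨hc1, hc2⟩, hdisj, hsum⟩ := hX
    refine ⟨⟨?_, ?_⟩, ?_, ?_⟩
    · rw [Finset.card_image_of_injective _ hfinj, hc1]
    · rw [Finset.card_image_of_injective _ hfinj, hc2]
    · rw [← Finset.image_inter _ _ hfinj, hdisj, Finset.image_empty]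
    · have e1 : (X.1.image f).sum id = u * X.1.sum id + (n1 : ZMod p) * c := by
        rw [Finset.sum_image (fun a _ b _ h => hfinj h)]
        simp only [hf, id_eq]
        rw [Finset.sum_add_distrib, ← Finset.mul_sum, Finset.sum_const, hc1,
          nsmul_eq_mul]
      have e2 : (X.2.image f).sum id = u * X.2.sum id + (n2 : ZMod p) * c := by
        rw [Finset.sum_image (fun a _ b _ h => hfinj h)]
        simp only [hf, id_eq]
        rw [Finset.sum_add_distrib, ← Finset.mul_sum, Finset.sum_const, hc2,
          nsmul_eq_mul]
      rw [e1, e2]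
      linear_combination u * hsum
  · intro X _ Y _ h
    simp only [Prod.mk.injEq] at h
    exact Prod.ext (Finset.image_injective hfinj h.1) (Finset.image_injective hfinj h.2)

lemma Bcount_affine (p : ℕ) [NeZero p] (hp : p.Prime) (i1 i2 n1 n2 : ℕ) (u c v : ZMod p)
    (hu : u ≠ 0) :
    Bcount p i1 i2 n1 n2 v =
      Bcount p i1 i2 n1 n2 (u * v + ((n1 : ZMod p) * i1 + (n2 : ZMod p) * i2) * c) := by
  haveI : Fact p.Prime := ⟨hp⟩
  refine le_antisymm (Bcount_affine_le p hp i1 i2 n1 n2 u c v hu) ?_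
  have h2 := Bcount_affine_le p hp i1 i2 n1 n2 u⁻¹ (-(u⁻¹ * c))
    (u * v + ((n1 : ZMod p) * i1 + (n2 : ZMod p) * i2) * c) (inv_ne_zero hu)
  have : u⁻¹ * (u * v + ((n1 : ZMod p) * i1 + (n2 : ZMod p) * i2) * c)
      + ((n1 : ZMod p) * i1 + (n2 : ZMod p) * i2) * (-(u⁻¹ * c)) = v := by
    field_simp
    ring
  rwa [this] at h2

lemma Bcount_total (p : ℕ) [NeZero p] (i1 i2 n1 n2 : ℕ) :
    ∑ v : ZMod p, Bcount p i1 i2 n1 n2 v = p.choose n1 * (p - n1).choose n2 := by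
  classical
  set D := ((((Finset.univ : Finset (ZMod p)).powersetCard n1) ×ˢ
      ((Finset.univ : Finset (ZMod p)).powersetCard n2)).filter
    (fun X => X.1 ∩ X.2 = ∅)) with hD
  have h1 : D.card = ∑ v : ZMod p, Bcount p i1 i2 n1 n2 v := by
    rw [Finset.card_eq_sum_card_fiberwise
      (f := fun X : Finset (ZMod p) × Finset (ZMod p) =>
        (i1 : ZMod p) * X.1.sum id + (i2 : ZMod p) * X.2.sum id)
      (t := Finset.univ) (fun x _ => Finset.mem_univ _)]
    apply Finset.sum_congr rfl
    intro v _
    rw [hD, Finset.filter_filter]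
    rfl
  have h2 : D.card = ∑ X1 ∈ (Finset.univ : Finset (ZMod p)).powersetCard n1,
      (D.filter (fun X => X.1 = X1)).card :=
    Finset.card_eq_sum_card_fiberwise (f := Prod.fst) (fun X hX => by
      rw [Finset.mem_coe, hD, Finset.mem_filter, Finset.mem_product] at hX
      exact hX.1.1)
  have h3 : ∀ X1 ∈ (Finset.univ : Finset (ZMod p)).powersetCard n1,
      (D.filter (fun X => X.1 = X1)).card = (p - n1).choose n2 := by
    intro X1 hX1
    rw [Finset.mem_powersetCard] at hX1
    have hb : (D.filter (fun X => X.1 = X1)).card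
        = (((Finset.univ : Finset (ZMod p)) \ X1).powersetCard n2).card := by
      apply Finset.card_nbij' (fun X => X.2) (fun Y => (X1, Y))
      · intro X hX
        simp only [Finset.mem_coe, hD, Finset.mem_filter, Finset.mem_product, Finset.mem_powersetCard,
          Finset.subset_univ, true_and] at hX ⊢
        obtain ⟨⟨⟨_, hc2⟩, hdisj⟩, hfst⟩ := hX
        refine ⟨?_, hc2⟩
        intro x hx
        rw [Finset.mem_sdiff]
        refine ⟨Finset.mem_univ _, fun hx1 => ?_⟩
        have : x ∈ X.1 ∩ X.2 := Finset.mem_inter.mpr ⟨hfst ▸ hx1, hx⟩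
        simp [hdisj] at this
      · intro Y hY
        simp only [Finset.mem_coe, Finset.mem_powersetCard, Finset.subset_sdiff, Finset.subset_univ,
          true_and] at hY
        simp only [Finset.mem_coe, hD, Finset.mem_filter, Finset.mem_product, Finset.mem_powersetCard,
          Finset.subset_univ, true_and, and_true]
        exact ⟨⟨hX1.2, hY.2⟩, Finset.disjoint_iff_inter_eq_empty.mp hY.1.symm⟩
      · intro X hX
        simp only [Finset.mem_coe, Finset.mem_filter] at hX
        exact Prod.ext hX.2.symm rfl
      · intro Y _
        rfl
    rw [hb, Finset.card_powersetCard, Finset.card_sdiff_of_subset (Finset.subset_univ _),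
      Finset.card_univ, ZMod.card, hX1.2]
  rw [← h1, h2, Finset.sum_congr rfl h3, Finset.sum_const, smul_eq_mul,
    Finset.card_powersetCard, Finset.card_univ, ZMod.card]


/-- "uncolored" Pascal's equation. -/
theorem rarefaction_stmt12 (p : ℕ) [NeZero p] (hp : p.Prime) (hodd : Odd p)
    (i1 i2 : ℕ) (hi1 : 1 ≤ i1 ∧ i1 ≤ p - 1) (hi2 : 1 ≤ i2 ∧ i2 ≤ p - 1) (hne : i1 ≠ i2)
    (n1 n2 : ℕ) (hn1 : 1 ≤ n1 ∧ n1 ≤ p - 2) (hn2 : 1 ≤ n2 ∧ n2 ≤ p - 2)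
    (hsum : n1 + n2 < p) :
    (Delta p i1 i2 n1 n2 ≡
      -Delta p i1 i2 (n1 - 1) n2 - Delta p i1 i2 n1 (n2 - 1) [ZMOD (p : ℤ)]) ∧
    (¬ (p ∣ n1 * i1 + n2 * i2) →
      Delta p i1 i2 n1 n2 =
        -Delta p i1 i2 (n1 - 1) n2 - Delta p i1 i2 n1 (n2 - 1)) := by
  haveI : Fact p.Prime := ⟨hp⟩
  obtain ⟨hn11, hn12⟩ := hn1
  obtain ⟨hn21, hn22⟩ := hn2
  have hp2 := hp.two_le
  have hs0 := Bcount_split p i1 i2 n1 n2 hn11 hn21 0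
  have hs1 := Bcount_split p i1 i2 n1 n2 hn11 hn21 1
  have hfib : ∀ v : ZMod p, v ≠ 0 →
      Bcount p i1 i2 n1 n2 v = Bcount p i1 i2 n1 n2 1 := by
    intro v hv
    have h := Bcount_affine p hp i1 i2 n1 n2 v 0 1 hv
    rw [mul_one, mul_zero, add_zero] at h
    exact h.symm
  have htot := Bcount_total p i1 i2 n1 n2
  have hsum_split : ∑ v : ZMod p, Bcount p i1 i2 n1 n2 v
      = (p - 1) * Bcount p i1 i2 n1 n2 1 + Bcount p i1 i2 n1 n2 0 := by
    rw [← Finset.sum_erase_add _ _ (Finset.mem_univ (0 : ZMod p))]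
    congr 1
    rw [Finset.sum_congr rfl (fun v hv => hfib v (Finset.mem_erase.mp hv).1),
      Finset.sum_const, smul_eq_mul, Finset.card_erase_of_mem (Finset.mem_univ _),
      Finset.card_univ, ZMod.card]
  have hdvd : p ∣ p.choose n1 := hp.dvd_choose_self (by omega) (by omega)
  have hkey : (p : ℤ) ∣ (Bcount p i1 i2 n1 n2 0 : ℤ) - Bcount p i1 i2 n1 n2 1 := by
    obtain ⟨k, hk⟩ := hdvd
    have hnat : (p - 1) * Bcount p i1 i2 n1 n2 1 + Bcount p i1 i2 n1 n2 0
        = p * k * (p - n1).choose n2 := by rw [← hsum_split, htot, hk]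
    have hz : ((p : ℤ) - 1) * Bcount p i1 i2 n1 n2 1 + Bcount p i1 i2 n1 n2 0
        = (p : ℤ) * k * (p - n1).choose n2 := by
      have := congrArg (Nat.cast : ℕ → ℤ) hnat
      push_cast [Nat.cast_sub (show 1 ≤ p by omega)] at this
      convert this using 2
    exact ⟨k * (p - n1).choose n2 - Bcount p i1 i2 n1 n2 1, by linarith⟩
  have hdelta : Delta p i1 i2 n1 n2 + Delta p i1 i2 (n1 - 1) n2 + Delta p i1 i2 n1 (n2 - 1)
      = (Bcount p i1 i2 n1 n2 0 : ℤ) - Bcount p i1 i2 n1 n2 1 := by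
    simp only [Delta]
    zify at hs0 hs1
    linarith
  constructor
  · have h1 : (-Delta p i1 i2 (n1 - 1) n2 - Delta p i1 i2 n1 (n2 - 1))
        - Delta p i1 i2 n1 n2
        = (Bcount p i1 i2 n1 n2 1 : ℤ) - Bcount p i1 i2 n1 n2 0 := by linarith
    exact (Int.modEq_iff_dvd.mpr (h1 ▸ (by
      have := dvd_neg.mpr hkey
      rwa [neg_sub] at this)))
  · intro hnd
    have hd0 : ((n1 : ZMod p) * i1 + (n2 : ZMod p) * i2) ≠ 0 := by
      intro h
      apply hnd
      have : ((n1 * i1 + n2 * i2 : ℕ) : ZMod p) = 0 := by push_cast; rw [← h]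
      exact (ZMod.natCast_eq_zero_iff _ _).mp this
    have h := Bcount_affine p hp i1 i2 n1 n2 1 (((n1 : ZMod p) * i1 + (n2 : ZMod p) * i2))⁻¹
      0 one_ne_zero
    rw [one_mul, zero_add, mul_inv_cancel₀ hd0] at h
    have hz : (Bcount p i1 i2 n1 n2 0 : ℤ) = Bcount p i1 i2 n1 n2 1 := by exact_mod_cast h
    linarith
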